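/- Let (X, ≤) be a finite poset in which every pair {x,y} has a greatest lower bound x∧y, having a greatest element 1. Let R be a ring with identity 1_R, and suppose α ↦ e_α is a map X → R with e_α e_β = e_{α∧β} for all α, β ∈ X, and e_1 = 1_R. Define f_α = Σ_{β ≤ α} μ_X(β, α) e_β, where μ_X is the Möbius function of X. Then the elements f_α, α ∈ X, are pairwise orthogonal idempotents of R whose sum equals 1_R, and e_α = Σ_{β ≤ α} f_β. -/

import Mathlib

open Finset

/-- Let `(X, ≤)` be a finite poset in which every pair has a
greatest lower bound (a meet-semilattice), with a greatest element `⊤`.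
Let `R` be a ring, and `α ↦ e α` a map `X → R` with `e α * e β = e (α ⊓ β)` and
`e ⊤ = 1`.  Defining `f α = ∑_{β ≤ α} μ_X(β, α) • e β`, where `μ_X` is the
Möbius function of `X`, the `f α` are pairwise orthogonal idempotents whose sum
is `1`, and moreover `e α = ∑_{β ≤ α} f β`. -/
theorem moebius_orthogonal_idempotents
    (X : Type*) [Fintype X] [SemilatticeInf X] [OrderTop X]
    [LocallyFiniteOrder X] [DecidableEq X] [DecidableRel (α := X) (· ≤ ·)]
    (R : Type*) [Ring R] (e : X → R)
    (hmul : ∀ α β : X, e α * e β = e (α ⊓ β)) (htop : e ⊤ = 1)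
    (f : X → R)
    (hf : ∀ α : X, f α =
      ∑ β ∈ Finset.univ.filter (fun β => β ≤ α),
        (IncidenceAlgebra.mu ℤ β α : ℤ) • e β) :
    (∀ α : X, f α * f α = f α) ∧
    (∀ α β : X, α ≠ β → f α * f β = 0) ∧
    (∑ α : X, f α = 1) ∧
    (∀ α : X, e α = ∑ β ∈ Finset.univ.filter (fun β => β ≤ α), f β) := by
  set S : X → Finset X := fun a => Finset.univ.filter (fun β => β ≤ a) with hSdef
  have hS : ∀ a β : X, β ∈ S a ↔ β ≤ a := by intro a β; simp [hSdef]
  -- Möbius inversion: e α = ∑_{β ≤ α} f β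
  have hinv : ∀ α : X, e α = ∑ β ∈ S α, f β := by
    intro α
    have step1 : ∑ β ∈ S α, f β
        = ∑ γ ∈ S α, (∑ β ∈ Icc γ α, IncidenceAlgebra.mu ℤ γ β) • e γ := by
      simp only [hf, Finset.sum_smul]
      rw [Finset.sum_comm' (t' := S α) (s' := fun γ => Icc γ α)]
      intro β γ
      simp only [hS, mem_Icc, mem_filter, mem_univ, true_and]
      constructor
      · rintro ⟨h1, h2⟩; exact ⟨⟨h2, h1⟩, h2.trans h1⟩
      · rintro ⟨⟨h1, h2⟩, h3⟩; exact ⟨h2, h1⟩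
    rw [step1]
    have step2 : ∀ γ ∈ S α,
        (∑ β ∈ Icc γ α, IncidenceAlgebra.mu ℤ γ β) • e γ
          = (if γ = α then (1 : ℤ) else 0) • e γ := by
      intro γ _; rw [IncidenceAlgebra.sum_Icc_mu_right]
    rw [Finset.sum_congr rfl step2]
    have hmem : α ∈ S α := (hS α α).mpr le_rfl
    rw [Finset.sum_eq_single α (fun b _ hb => by rw [if_neg hb, zero_smul])
      (fun h => absurd hmem h)]
    simp
  -- decomposition of S α
  have hSsplit : ∀ α : X, S α = insert α ((S α).erase α) := by
    intro α; rw [Finset.insert_erase ((hS α α).mpr le_rfl)]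
  -- Key: e γ * f α = if α ≤ γ then f α else 0
  have hkey : ∀ α γ : X, e γ * f α = if α ≤ γ then f α else 0 := by
    intro α
    induction α using WellFoundedLT.induction with
    | _ α IH =>
      intro γ
      have hlt' : ∀ β ∈ (S α).erase α, β < α := by
        intro β hβ
        exact lt_of_le_of_ne ((hS α β).mp (Finset.mem_of_mem_erase hβ))
          (Finset.ne_of_mem_erase hβ)
      have hfα : f α = e α - ∑ β ∈ (S α).erase α, f β := by
        rw [hinv α, ← Finset.add_sum_erase _ f ((hS α α).mpr le_rfl)]
        abel
      rw [hfα, mul_sub, Finset.mul_sum, hmul]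
      have hsum : ∑ β ∈ (S α).erase α, e γ * f β
          = ∑ β ∈ ((S α).erase α).filter (fun β => β ≤ γ), f β := by
        conv_rhs => rw [Finset.sum_filter]
        exact Finset.sum_congr rfl fun β hβ => IH β (hlt' β hβ) γ
      rw [hsum]
      by_cases h : α ≤ γ
      · rw [if_pos h, inf_eq_right.mpr h]
        have heq : ((S α).erase α).filter (fun β => β ≤ γ) = (S α).erase α := by
          apply Finset.filter_true_of_mem
          intro β hβ; exact (hlt' β hβ).le.trans h
        rw [heq, ← hfα]
      · rw [if_neg h]
        have hlt : γ ⊓ α < α := lt_of_le_of_ne inf_le_right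
          (fun hc => h (by rw [← hc]; exact inf_le_left))
        have heq : ((S α).erase α).filter (fun β => β ≤ γ) = S (γ ⊓ α) := by
          ext β
          simp only [mem_filter, Finset.mem_erase, hS, le_inf_iff]
          constructor
          · rintro ⟨⟨h1, h2⟩, h3⟩; exact ⟨h3, h2⟩
          · rintro ⟨h1, h2⟩
            exact ⟨⟨ne_of_lt (lt_of_le_of_lt (le_inf h1 h2) hlt), h2⟩, h1⟩
        rw [heq, ← hinv, sub_self]
  -- Multiplication formula: f α * f β = if β = α then f β else 0
  have hprod : ∀ α β : X, f α * f β = if β = α then f β else 0 := by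
    intro α β
    calc f α * f β
        = ∑ γ ∈ S α, IncidenceAlgebra.mu ℤ γ α • (e γ * f β) := by
          rw [hf α, Finset.sum_mul]
          exact Finset.sum_congr rfl fun γ _ => smul_mul_assoc _ _ _
      _ = ∑ γ ∈ S α, IncidenceAlgebra.mu ℤ γ α •
            (if β ≤ γ then f β else 0) := by
          exact Finset.sum_congr rfl fun γ _ => by rw [hkey]
      _ = ∑ γ ∈ (S α).filter (fun γ => β ≤ γ),
            IncidenceAlgebra.mu ℤ γ α • f β := by
          conv_rhs => rw [Finset.sum_filter]
          exact Finset.sum_congr rfl fun γ _ => by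
            by_cases h : β ≤ γ <;> simp [h]
      _ = (∑ γ ∈ Icc β α, IncidenceAlgebra.mu ℤ γ α) • f β := by
          rw [Finset.sum_smul]
          apply Finset.sum_congr _ fun _ _ => rfl
          ext γ; simp only [mem_filter, hS, mem_Icc]; tauto
      _ = (if β = α then (1:ℤ) else 0) • f β := by
          rw [IncidenceAlgebra.sum_Icc_mu_left]
      _ = if β = α then f β else 0 := by split <;> simp
  refine ⟨fun α => by simpa using hprod α α,
    fun α β hne => by rw [hprod, if_neg (fun h => hne h.symm)],
    ?_, fun α => hinv α⟩
  have h1 := hinv ⊤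
  have h2 : S ⊤ = Finset.univ := by ext β; simp [hS]
  rw [htop, h2] at h1
  exact h1.symm
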